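/- arXiv:0809.1848 — 3 statements merged into one kernel-verified Lean document; each statement's English description precedes it below -/
import Mathlib

section
/- Define M(x) := (λ₂'(1−f(x)²) − f'(x)²)/(1−f(x)²)^{3/2} · ( √(1−R(x)²) + R(x)·arcsin(R(x)) ). There exist universal constants δ₀ > 0 and C > 0 such that for every integer N ≥ 1 and every 0 < δ < δ₀, ∫₀^δ M(x) dx ≤ C·δ². -/
open MeasureTheory Filter Real Topology

/-- `m = N + 1/2`. -/
noncomputable def mval (N : ℕ) : ℝ := (N : ℝ) + 1 / 2

/-- The scaled covariance function
`f(x) = r_{X_N}(x/m) = (1/N)Σ_{n=1}^N cos(nx/m)`. -/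
noncomputable def f (N : ℕ) (x : ℝ) : ℝ :=
  (1 / N) * ∑ n ∈ Finset.Icc 1 N, Real.cos (n * x / mval N)

/-- `λ₂' = (1 + 1/(2m))/3`. -/
noncomputable def lam2' (N : ℕ) : ℝ := (1 + 1 / (2 * mval N)) / 3

/-- `R(x) = (f''(x)(1−f(x)²) + f(x)f'(x)²)/(λ₂'(1−f(x)²) − f'(x)²)`. -/
noncomputable def R (N : ℕ) (x : ℝ) : ℝ :=
  (deriv (deriv (f N)) x * (1 - f N x ^ 2) + f N x * deriv (f N) x ^ 2) /
    (lam2' N * (1 - f N x ^ 2) - deriv (f N) x ^ 2)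

/-- `M(x) = (λ₂'(1−f(x)²) − f'(x)²)/(1−f(x)²)^{3/2} · (√(1−R(x)²) + R(x)·arcsin R(x))`. -/
noncomputable def Mfun (N : ℕ) (x : ℝ) : ℝ :=
  (lam2' N * (1 - f N x ^ 2) - deriv (f N) x ^ 2) / (1 - f N x ^ 2) ^ ((3 : ℝ) / 2) *
    (Real.sqrt (1 - R N x ^ 2) + R N x * Real.arcsin (R N x))

noncomputable def fd (N : ℕ) (x : ℝ) : ℝ :=
  (1 / N) * ∑ n ∈ Finset.Icc 1 N, -(((n : ℝ) / mval N) * Real.sin (n * x / mval N))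

noncomputable def fdd (N : ℕ) (x : ℝ) : ℝ :=
  (1 / N) * ∑ n ∈ Finset.Icc 1 N, -(((n : ℝ) / mval N) ^ 2 * Real.cos (n * x / mval N))

lemma mval_pos (N : ℕ) : 0 < mval N := by unfold mval; positivity

lemma hasDerivAt_inner (N n : ℕ) (x : ℝ) :
    HasDerivAt (fun y : ℝ => (n : ℝ) * y / mval N) ((n : ℝ) / mval N) x := by
  simpa using ((hasDerivAt_id x).const_mul (n : ℝ)).div_const (mval N)

lemma hasDerivAt_f (N : ℕ) (x : ℝ) : HasDerivAt (f N) (fd N x) x := by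
  have h : HasDerivAt (fun y : ℝ => ∑ n ∈ Finset.Icc 1 N, Real.cos ((n : ℝ) * y / mval N))
      (∑ n ∈ Finset.Icc 1 N, -(((n : ℝ) / mval N) * Real.sin ((n : ℝ) * x / mval N))) x := by
    apply HasDerivAt.fun_sum
    intro n _
    have h2 := (Real.hasDerivAt_cos ((n : ℝ) * x / mval N)).comp x (hasDerivAt_inner N n x)
    exact h2.congr_deriv (by ring)
  show HasDerivAt (fun y : ℝ => (1 / (N : ℝ)) * ∑ n ∈ Finset.Icc 1 N,
    Real.cos ((n : ℝ) * y / mval N)) (fd N x) x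
  exact h.const_mul _

lemma hasDerivAt_fd (N : ℕ) (x : ℝ) : HasDerivAt (fd N) (fdd N x) x := by
  have h : HasDerivAt
      (fun y : ℝ => ∑ n ∈ Finset.Icc 1 N, -(((n : ℝ) / mval N) * Real.sin ((n : ℝ) * y / mval N)))
      (∑ n ∈ Finset.Icc 1 N, -(((n : ℝ) / mval N) ^ 2 * Real.cos ((n : ℝ) * x / mval N))) x := by
    apply HasDerivAt.fun_sum
    intro n _
    have h2 := (((Real.hasDerivAt_sin ((n : ℝ) * x / mval N)).comp x
      (hasDerivAt_inner N n x)).const_mul ((n : ℝ) / mval N)).neg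
    exact h2.congr_deriv (by ring)
  show HasDerivAt (fun y : ℝ => (1 / (N : ℝ)) * ∑ n ∈ Finset.Icc 1 N,
    -(((n : ℝ) / mval N) * Real.sin ((n : ℝ) * y / mval N))) (fdd N x) x
  exact h.const_mul _

lemma deriv_f (N : ℕ) : deriv (f N) = fd N := funext fun x => (hasDerivAt_f N x).deriv

lemma deriv2_f (N : ℕ) : deriv (deriv (f N)) = fdd N := by
  rw [deriv_f]; exact funext fun x => (hasDerivAt_fd N x).deriv

lemma sum_sq (N : ℕ) : ∑ n ∈ Finset.Icc 1 N, ((n : ℝ)) ^ 2 = N * (N + 1) * (2 * N + 1) / 6 := by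
  induction N with
  | zero => simp
  | succ k ih =>
    rw [Finset.sum_Icc_succ_top (by omega : 1 ≤ k + 1), ih]
    push_cast; ring

lemma lam2'_eq (N : ℕ) (hN : 1 ≤ N) :
    lam2' N = (1 / (N : ℝ)) * ∑ n ∈ Finset.Icc 1 N, ((n : ℝ) / mval N) ^ 2 := by
  have hsum : ∑ n ∈ Finset.Icc 1 N, ((n : ℝ) / mval N) ^ 2
      = (∑ n ∈ Finset.Icc 1 N, ((n : ℝ)) ^ 2) / (mval N) ^ 2 := by
    rw [Finset.sum_div]; exact Finset.sum_congr rfl fun n _ => div_pow _ _ _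
  have hN0 : (N : ℝ) ≠ 0 := Nat.cast_ne_zero.mpr (by omega)
  have hm : ((N : ℝ) + 1 / 2) ≠ 0 := by positivity
  rw [hsum, sum_sq]
  unfold lam2' mval
  field_simp
  ring

lemma avg_abs_le (N : ℕ) (hN : 1 ≤ N) (g : ℕ → ℝ) (b : ℝ)
    (hb : ∀ n ∈ Finset.Icc 1 N, |g n| ≤ b) :
    |(1 / (N : ℝ)) * ∑ n ∈ Finset.Icc 1 N, g n| ≤ b := by
  have hN0 : (0 : ℝ) < N := by exact_mod_cast Nat.pos_of_ne_zero (by omega)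
  have h1 : |∑ n ∈ Finset.Icc 1 N, g n| ≤ ∑ n ∈ Finset.Icc 1 N, |g n| :=
    Finset.abs_sum_le_sum_abs _ _
  have h2 : ∑ n ∈ Finset.Icc 1 N, |g n| ≤ ∑ n ∈ Finset.Icc 1 N, b := Finset.sum_le_sum hb
  have h3 : ∑ n ∈ Finset.Icc 1 N, (b : ℝ) = (N : ℝ) * b := by
    rw [Finset.sum_const, Nat.card_Icc]; simp [nsmul_eq_mul]
  rw [abs_mul, abs_of_pos (by positivity : (0:ℝ) < 1 / (N:ℝ))]
  calc (1 / (N : ℝ)) * |∑ n ∈ Finset.Icc 1 N, g n|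
      ≤ (1 / (N : ℝ)) * ((N : ℝ) * b) := by
        apply mul_le_mul_of_nonneg_left _ (by positivity)
        exact h1.trans (h2.trans h3.le)
    _ = b := by field_simp

lemma ratio_mem (N n : ℕ) (hn : n ∈ Finset.Icc 1 N) :
    0 ≤ (n : ℝ) / mval N ∧ (n : ℝ) / mval N ≤ 1 := by
  obtain ⟨-, h2⟩ := Finset.mem_Icc.mp hn
  refine ⟨div_nonneg (Nat.cast_nonneg n) (mval_pos N).le, ?_⟩
  rw [div_le_one (mval_pos N)]
  have : (n : ℝ) ≤ N := by exact_mod_cast h2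
  unfold mval; linarith

lemma f_abs_le_one (N : ℕ) (hN : 1 ≤ N) (x : ℝ) : |f N x| ≤ 1 := by
  rw [f]
  exact avg_abs_le N hN _ 1 fun n _ => Real.abs_cos_le_one _

lemma f_taylor (N : ℕ) (hN : 1 ≤ N) (x : ℝ) (hx0 : 0 ≤ x) (hx1 : x ≤ 1) :
    |f N x - (1 - lam2' N * x ^ 2 / 2)| ≤ x ^ 4 * (5 / 96) := by
  have hN0 : (N : ℝ) ≠ 0 := Nat.cast_ne_zero.mpr (by omega)
  have key : f N x - (1 - lam2' N * x ^ 2 / 2)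
      = (1 / (N : ℝ)) * ∑ n ∈ Finset.Icc 1 N,
          (Real.cos ((n : ℝ) * x / mval N) - (1 - ((n : ℝ) * x / mval N) ^ 2 / 2)) := by
    rw [f, lam2'_eq N hN, Finset.sum_sub_distrib, Finset.sum_sub_distrib, Finset.sum_const,
      Nat.card_Icc]
    have h4 : ∑ n ∈ Finset.Icc 1 N, ((n : ℝ) * x / mval N) ^ 2 / 2
        = (∑ n ∈ Finset.Icc 1 N, ((n : ℝ) / mval N) ^ 2) * (x ^ 2 / 2) := by
      rw [Finset.sum_mul]; exact Finset.sum_congr rfl fun n _ => by ring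
    rw [h4]
    generalize (∑ n ∈ Finset.Icc 1 N, Real.cos ((n : ℝ) * x / mval N)) = C
    simp only [Nat.add_sub_cancel, nsmul_eq_mul, mul_one]
    field_simp
  rw [key]
  apply avg_abs_le N hN
  intro n hn
  obtain ⟨h0, h1⟩ := ratio_mem N n hn
  have hteq : (n : ℝ) * x / mval N = ((n : ℝ) / mval N) * x := by ring
  have ht0 : 0 ≤ (n : ℝ) * x / mval N := by rw [hteq]; positivity
  have htx : (n : ℝ) * x / mval N ≤ x := by
    rw [hteq]; nlinarith
  have habs : |(n : ℝ) * x / mval N| ≤ 1 := by rw [abs_of_nonneg ht0]; linarith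
  calc |Real.cos ((n : ℝ) * x / mval N) - (1 - ((n : ℝ) * x / mval N) ^ 2 / 2)|
      ≤ |(n : ℝ) * x / mval N| ^ 4 * (5 / 96) := Real.cos_bound habs
    _ ≤ x ^ 4 * (5 / 96) := by
        have : |(n : ℝ) * x / mval N| = (n : ℝ) * x / mval N := abs_of_nonneg ht0
        rw [this]
        have := pow_le_pow_left₀ ht0 htx 4
        nlinarith

lemma fd_taylor (N : ℕ) (hN : 1 ≤ N) (x : ℝ) (hx0 : 0 ≤ x) (hx1 : x ≤ 1) :
    |fd N x + lam2' N * x| ≤ x ^ 3 / 4 := by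
  have key : fd N x + lam2' N * x
      = (1 / (N : ℝ)) * ∑ n ∈ Finset.Icc 1 N,
          (((n : ℝ) / mval N) * (((n : ℝ) * x / mval N) - Real.sin ((n : ℝ) * x / mval N))) := by
    rw [fd, lam2'_eq N hN, mul_assoc, Finset.sum_mul, ← mul_add, ← Finset.sum_add_distrib]
    congr 1
    exact Finset.sum_congr rfl fun n _ => by ring
  rw [key]
  apply avg_abs_le N hN
  intro n hn
  obtain ⟨h0, h1⟩ := ratio_mem N n hn
  set t := (n : ℝ) * x / mval N with htdef
  have hteq : t = ((n : ℝ) / mval N) * x := by rw [htdef]; ring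
  have ht0 : 0 ≤ t := by rw [hteq]; positivity
  have htx : t ≤ x := by rw [hteq]; nlinarith
  have habs : |t| ≤ 1 := by rw [abs_of_nonneg ht0]; linarith
  have hsin := Real.sin_bound habs
  rw [abs_mul, abs_of_nonneg h0]
  have h2 : |t - Real.sin t| ≤ x ^ 3 / 4 := by
    have h3 : |t - Real.sin t| ≤ |t| ^ 4 * (5 / 96) + |t| ^ 3 / 6 := by
      have h4 : t - Real.sin t = -(Real.sin t - (t - t ^ 3 / 6)) + t ^ 3 / 6 := by ring
      rw [h4]
      have h5 : |t ^ 3 / 6| = |t| ^ 3 / 6 := by rw [abs_div, abs_pow]; norm_num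
      calc |(-(Real.sin t - (t - t ^ 3 / 6))) + t ^ 3 / 6|
          ≤ |(-(Real.sin t - (t - t ^ 3 / 6)))| + |t ^ 3 / 6| := abs_add_le _ _
        _ ≤ |t| ^ 4 * (5 / 96) + |t| ^ 3 / 6 := by
            rw [abs_neg, h5]; exact add_le_add (hsin.trans (by nlinarith [pow_nonneg (abs_nonneg t) 4, abs_nonneg t])) le_rfl
    have ht4 : |t| ^ 4 ≤ x ^ 3 := by
      rw [abs_of_nonneg ht0]
      calc t ^ 4 ≤ x ^ 4 := pow_le_pow_left₀ ht0 htx 4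
        _ ≤ x ^ 3 := pow_le_pow_of_le_one hx0 hx1 (by norm_num)
    have ht3 : |t| ^ 3 ≤ x ^ 3 := by
      rw [abs_of_nonneg ht0]; exact pow_le_pow_left₀ ht0 htx 3
    calc |t - Real.sin t| ≤ |t| ^ 4 * (5 / 96) + |t| ^ 3 / 6 := h3
      _ ≤ x ^ 3 * (5 / 96) + x ^ 3 / 6 := by gcongr
      _ ≤ x ^ 3 / 4 := by nlinarith [pow_nonneg hx0 3]
  calc ((n : ℝ) / mval N) * |t - Real.sin t| ≤ 1 * (x ^ 3 / 4) := by
        apply mul_le_mul h1 h2 (abs_nonneg _) zero_le_one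
    _ = x ^ 3 / 4 := one_mul _

lemma fdd_taylor (N : ℕ) (hN : 1 ≤ N) (x : ℝ) (hx0 : 0 ≤ x) (hx1 : x ≤ 1) :
    |fdd N x + lam2' N| ≤ x ^ 2 / 2 := by
  have key : fdd N x + lam2' N
      = (1 / (N : ℝ)) * ∑ n ∈ Finset.Icc 1 N,
          (((n : ℝ) / mval N) ^ 2 * (1 - Real.cos ((n : ℝ) * x / mval N))) := by
    rw [fdd, lam2'_eq N hN, ← mul_add, ← Finset.sum_add_distrib]
    congr 1
    exact Finset.sum_congr rfl fun n _ => by ring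
  rw [key]
  apply avg_abs_le N hN
  intro n hn
  obtain ⟨h0, h1⟩ := ratio_mem N n hn
  set t := (n : ℝ) * x / mval N with htdef
  have hteq : t = ((n : ℝ) / mval N) * x := by rw [htdef]; ring
  have ht0 : 0 ≤ t := by rw [hteq]; positivity
  have htx : t ≤ x := by rw [hteq]; nlinarith
  have hc1 : 1 - Real.cos t ≤ t ^ 2 / 2 := by
    have := Real.one_sub_sq_div_two_le_cos (x := t)
    linarith
  have hc0 : 0 ≤ 1 - Real.cos t := by have := Real.cos_le_one t; linarith
  rw [abs_mul, abs_of_nonneg (sq_nonneg _), abs_of_nonneg hc0]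
  have hsq : ((n : ℝ) / mval N) ^ 2 ≤ 1 := by nlinarith
  calc ((n : ℝ) / mval N) ^ 2 * (1 - Real.cos t) ≤ 1 * (t ^ 2 / 2) := by
        apply mul_le_mul hsq (by linarith) hc0 zero_le_one
    _ ≤ x ^ 2 / 2 := by nlinarith

lemma aux1 (x l : ℝ) (hx0 : 0 < x) (hx : x ≤ 1/10) (hl1 : 1/3 ≤ l) (hl2 : l ≤ 4/9) :
    l^2*x^4/4 + 2*(x^4*(5/96)) + (x^4*(5/96))^2 ≤ x^4/2 := by
  have h4 : (0:ℝ) ≤ x^4 := by positivity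
  have h44 : x^4 ≤ 1/10000 := by
    have := pow_le_pow_left₀ hx0.le hx 4; norm_num at this; linarith
  have hl : l^2 ≤ (4/9)^2 := pow_le_pow_left₀ (by linarith) hl2 2
  have t1 : l^2*x^4 ≤ (4/9)^2*x^4 := mul_le_mul_of_nonneg_right hl h4
  have t3 : x^4*x^4 ≤ x^4*(1/10000) := mul_le_mul_of_nonneg_left h44 h4
  nlinarith [t1, t3, h4]

lemma aux2 (x : ℝ) (hx0 : 0 < x) (hx : x ≤ 1/10) :
    (x^3/4)^2 + 2*(4/9)*x*(x^3/4) ≤ x^4/4 := by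
  have h4 : (0:ℝ) ≤ x^4 := by positivity
  have h2 : x^2 ≤ 1/100 := by
    have := pow_le_pow_left₀ hx0.le hx 2; norm_num at this; linarith
  have t : x^4*x^2 ≤ x^4*(1/100) := mul_le_mul_of_nonneg_left h2 h4
  nlinarith [t, h4]

lemma aux3 (x : ℝ) (hx0 : 0 < x) (hx : x ≤ 1/10) :
    (4/9)^2*x^2*(x^2/4) + (x^2/2)*((4/9)*x^2) + (x^2/2)*(x^4/2)
      + (4/9)*(x^4/2) + 1*(x^4/4) ≤ 2*x^4 := by
  have h4 : (0:ℝ) ≤ x^4 := by positivity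
  have h2 : x^2 ≤ 1/100 := by
    have := pow_le_pow_left₀ hx0.le hx 2; norm_num at this; linarith
  have t : x^4*x^2 ≤ x^4*(1/100) := mul_le_mul_of_nonneg_left h2 h4
  nlinarith [t, h4]

set_option maxHeartbeats 1000000 in
lemma core (l F F1 F2 x : ℝ) (hl1 : 1/3 ≤ l) (hl2 : l ≤ 4/9)
    (hx0 : 0 < x) (hx : x ≤ 1/10)
    (hFa : |F| ≤ 1)
    (hT0 : |F - (1 - l*x^2/2)| ≤ x^4*(5/96))
    (hT1 : |F1 + l*x| ≤ x^3/4)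
    (hT2 : |F2 + l| ≤ x^2/2) :
    x^2/8 ≤ 1 - F^2 ∧ |l*(1-F^2) - F1^2| ≤ x^4 ∧ |F2*(1-F^2) + F*F1^2| ≤ 2*x^4 := by
  obtain ⟨h0l, h0r⟩ := abs_le.mp hT0
  obtain ⟨h1l, h1r⟩ := abs_le.mp hT1
  obtain ⟨h2l, h2r⟩ := abs_le.mp hT2
  obtain ⟨hFl, hFr⟩ := abs_le.mp hFa
  have hx2 : x^2 ≤ 1/100 := by nlinarith
  have hx4 : x^4 ≤ x^2/100 := by nlinarith
  have hx4' : x^4 ≤ 1/10000 := by nlinarith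
  have hx4nn : (0:ℝ) ≤ x^4 := by positivity
  have hx2nn : (0:ℝ) ≤ x^2 := sq_nonneg x
  have hl0 : (0:ℝ) ≤ l := by linarith
  have hlx2 : 0 ≤ l*x^2 := mul_nonneg hl0 hx2nn
  have hlx2' : l*x^2 ≤ (4/9)*(1/100) := mul_le_mul hl2 hx2 hx2nn (by norm_num)
  have h1F : x^2/8 ≤ 1 - F := by nlinarith
  have hF0 : (0:ℝ) ≤ F := by nlinarith
  have hmain : x^2/8 ≤ 1 - F^2 := by
    have hFF : F*F ≤ F*1 := mul_le_mul_of_nonneg_left hFr hF0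
    have hsq : F^2 = F*F := sq F
    linarith
  have hFub : 1 - F ≤ x^2/4 := by nlinarith
  -- |p| ≤ x^4/2 where p = (1-F^2) - l*x^2
  have hp : |(1-F^2) - l*x^2| ≤ x^4/2 := by
    have hid : (1-F^2) - l*x^2
        = -(l^2*x^4/4 + 2*(F - (1 - l*x^2/2))*(1 - l*x^2/2) + (F - (1 - l*x^2/2))^2) := by
      ring
    set e := F - (1 - l*x^2/2) with hedef
    have he : |e| ≤ x^4*(5/96) := hT0
    have hb : |1 - l*x^2/2| ≤ 1 := by rw [abs_le]; constructor <;> linarith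
    rw [hid, abs_neg]
    have h1 : |l^2*x^4/4| = l^2*x^4/4 := abs_of_nonneg (by positivity)
    have h2 : |2*e*(1 - l*x^2/2)| ≤ 2*(x^4*(5/96)) := by
      rw [abs_mul, abs_mul, abs_two]
      calc 2 * |e| * |1 - l*x^2/2| ≤ 2 * (x^4*(5/96)) * 1 := by
            apply mul_le_mul (by linarith) hb (abs_nonneg _) (by positivity)
        _ = 2*(x^4*(5/96)) := by ring
    have h3 : |e^2| ≤ (x^4*(5/96))^2 := by
      rw [abs_pow]; exact pow_le_pow_left₀ (abs_nonneg _) he 2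
    have htr : |l^2*x^4/4 + 2*e*(1 - l*x^2/2) + e^2|
        ≤ |l^2*x^4/4| + |2*e*(1 - l*x^2/2)| + |e^2| := by
      calc |l^2*x^4/4 + 2*e*(1 - l*x^2/2) + e^2|
          ≤ |l^2*x^4/4 + 2*e*(1 - l*x^2/2)| + |e^2| := abs_add_le _ _
        _ ≤ |l^2*x^4/4| + |2*e*(1 - l*x^2/2)| + |e^2| := by
            linarith [abs_add_le (l^2*x^4/4) (2*e*(1 - l*x^2/2))]
    have hfin : l^2*x^4/4 + 2*(x^4*(5/96)) + (x^4*(5/96))^2 ≤ x^4/2 :=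
      aux1 x l hx0 hx hl1 hl2
    linarith [htr, h2, h3, h1.le, h1.ge]
  -- |q| ≤ x^4/4 where q = F1^2 - l^2*x^2
  have hq : |F1^2 - l^2*x^2| ≤ x^4/4 := by
    have hid : F1^2 - l^2*x^2 = (F1 + l*x)^2 - 2*l*x*(F1 + l*x) := by ring
    set e := F1 + l*x with hedef
    have he : |e| ≤ x^3/4 := hT1
    rw [hid]
    have h1 : |e^2| ≤ (x^3/4)^2 := by
      rw [abs_pow]; exact pow_le_pow_left₀ (abs_nonneg _) he 2
    have h2 : |2*l*x*e| ≤ 2*(4/9)*x*(x^3/4) := by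
      rw [abs_mul]
      have hlx : |2*l*x| ≤ 2*(4/9)*x := by
        have hnn : (0:ℝ) ≤ 2*l*x := by positivity
        rw [abs_of_nonneg hnn]
        have := mul_le_mul_of_nonneg_right (by linarith : 2*l ≤ 2*(4/9)) hx0.le
        linarith
      calc |2*l*x| * |e| ≤ (2*(4/9)*x) * (x^3/4) := by
            apply mul_le_mul hlx he (abs_nonneg _) (by positivity)
        _ = 2*(4/9)*x*(x^3/4) := by ring
    have htr := abs_sub (e^2) (2*l*x*e)
    have hfin : (x^3/4)^2 + 2*(4/9)*x*(x^3/4) ≤ x^4/4 := aux2 x hx0 hx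
    calc |e^2 - 2*l*x*e| ≤ |e^2| + |2*l*x*e| := abs_sub _ _
      _ ≤ (x^3/4)^2 + 2*(4/9)*x*(x^3/4) := add_le_add h1 h2
      _ ≤ x^4/4 := hfin
  obtain ⟨hpl, hpr⟩ := abs_le.mp hp
  obtain ⟨hql, hqr⟩ := abs_le.mp hq
  have hD : |l*(1-F^2) - F1^2| ≤ x^4 := by
    have hid : l*(1-F^2) - F1^2 = l*((1-F^2) - l*x^2) - (F1^2 - l^2*x^2) := by ring
    rw [hid]
    have h1 : |l*((1-F^2) - l*x^2)| ≤ (4/9)*(x^4/2) := by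
      rw [abs_mul, abs_of_nonneg (by linarith : (0:ℝ) ≤ l)]
      apply mul_le_mul hl2 hp (abs_nonneg _) (by norm_num)
    calc |l*((1-F^2) - l*x^2) - (F1^2 - l^2*x^2)|
        ≤ |l*((1-F^2) - l*x^2)| + |F1^2 - l^2*x^2| := abs_sub _ _
      _ ≤ (4/9)*(x^4/2) + x^4/4 := add_le_add h1 hq
      _ ≤ x^4 := by linarith
  refine ⟨hmain, hD, ?_⟩
  have hid2 : F2*(1-F^2) + F*F1^2
      = -(l^2*x^2*(1-F)) + (F2+l)*(l*x^2) + (F2+l)*((1-F^2) - l*x^2)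
        - l*((1-F^2) - l*x^2) + F*(F1^2 - l^2*x^2) := by ring
  rw [hid2]
  have b1 : |l^2*x^2*(1-F)| ≤ (4/9)^2*x^2*(x^2/4) := by
    rw [abs_mul, abs_mul, abs_of_nonneg (sq_nonneg l), abs_of_nonneg hx2nn,
      abs_of_nonneg (by linarith : (0:ℝ) ≤ 1 - F)]
    have : l^2 ≤ (4/9)^2 := by nlinarith [sq_nonneg l]
    apply mul_le_mul (mul_le_mul this le_rfl hx2nn (by positivity)) hFub (by linarith)
      (by positivity)
  have b2 : |(F2+l)*(l*x^2)| ≤ (x^2/2)*((4/9)*x^2) := by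
    rw [abs_mul]
    apply mul_le_mul hT2 ?_ (abs_nonneg _) (by positivity)
    rw [abs_mul, abs_of_nonneg (by linarith : (0:ℝ) ≤ l), abs_of_nonneg hx2nn]
    apply mul_le_mul hl2 le_rfl hx2nn (by norm_num)
  have b3 : |(F2+l)*((1-F^2) - l*x^2)| ≤ (x^2/2)*(x^4/2) := by
    rw [abs_mul]
    exact mul_le_mul hT2 hp (abs_nonneg _) (by positivity)
  have b4 : |l*((1-F^2) - l*x^2)| ≤ (4/9)*(x^4/2) := by
    rw [abs_mul, abs_of_nonneg (by linarith : (0:ℝ) ≤ l)]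
    exact mul_le_mul hl2 hp (abs_nonneg _) (by norm_num)
  have b5 : |F*(F1^2 - l^2*x^2)| ≤ 1*(x^4/4) := by
    rw [abs_mul]
    exact mul_le_mul hFa hq (abs_nonneg _) zero_le_one
  have htr : |(-(l^2*x^2*(1-F)) + (F2+l)*(l*x^2) + (F2+l)*((1-F^2) - l*x^2)
        - l*((1-F^2) - l*x^2) + F*(F1^2 - l^2*x^2))|
      ≤ |l^2*x^2*(1-F)| + |(F2+l)*(l*x^2)| + |(F2+l)*((1-F^2) - l*x^2)|
        + |l*((1-F^2) - l*x^2)| + |F*(F1^2 - l^2*x^2)| := by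
    calc _ ≤ |(-(l^2*x^2*(1-F)) + (F2+l)*(l*x^2) + (F2+l)*((1-F^2) - l*x^2)
            - l*((1-F^2) - l*x^2))| + |F*(F1^2 - l^2*x^2)| := abs_add_le _ _
      _ ≤ |(-(l^2*x^2*(1-F)) + (F2+l)*(l*x^2) + (F2+l)*((1-F^2) - l*x^2))|
            + |l*((1-F^2) - l*x^2)| + |F*(F1^2 - l^2*x^2)| := by
          linarith [abs_sub (-(l^2*x^2*(1-F)) + (F2+l)*(l*x^2) + (F2+l)*((1-F^2) - l*x^2))
            (l*((1-F^2) - l*x^2))]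
      _ ≤ |(-(l^2*x^2*(1-F)) + (F2+l)*(l*x^2))| + |(F2+l)*((1-F^2) - l*x^2)|
            + |l*((1-F^2) - l*x^2)| + |F*(F1^2 - l^2*x^2)| := by
          linarith [abs_add_le (-(l^2*x^2*(1-F)) + (F2+l)*(l*x^2)) ((F2+l)*((1-F^2) - l*x^2))]
      _ ≤ |l^2*x^2*(1-F)| + |(F2+l)*(l*x^2)| + |(F2+l)*((1-F^2) - l*x^2)|
            + |l*((1-F^2) - l*x^2)| + |F*(F1^2 - l^2*x^2)| := by
          have := abs_add_le (-(l^2*x^2*(1-F))) ((F2+l)*(l*x^2))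
          rw [abs_neg] at this
          linarith
  have hfin : (4/9)^2*x^2*(x^2/4) + (x^2/2)*((4/9)*x^2) + (x^2/2)*(x^4/2)
      + (4/9)*(x^4/2) + 1*(x^4/4) ≤ 2*x^4 := aux3 x hx0 hx
  linarith [htr, b1, b2, b3, b4, b5, hfin]

lemma lam2'_bounds (N : ℕ) (hN : 1 ≤ N) : 1/3 ≤ lam2' N ∧ lam2' N ≤ 4/9 := by
  have hm : (3:ℝ)/2 ≤ mval N := by
    unfold mval
    have : (1:ℝ) ≤ N := by exact_mod_cast hN
    linarith
  have hmpos := mval_pos N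
  have h1 : 1/(2*mval N) ≤ 1/3 := by
    rw [div_le_div_iff₀ (by linarith) (by norm_num)]; linarith
  have h2 : 0 < 1/(2*mval N) := by positivity
  unfold lam2'
  constructor <;> linarith

lemma Mfun_bound (N : ℕ) (hN : 1 ≤ N) (x : ℝ) (hx0 : 0 < x) (hx : x ≤ 1/10) :
    |Mfun N x| ≤ 120 * x := by
  obtain ⟨hl1, hl2⟩ := lam2'_bounds N hN
  have hx1 : x ≤ 1 := by linarith
  have hT0 := f_taylor N hN x hx0.le hx1
  have hT1 := fd_taylor N hN x hx0.le hx1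
  have hT2 := fdd_taylor N hN x hx0.le hx1
  rw [← deriv_f] at hT1
  rw [← deriv2_f] at hT2
  have hFa := f_abs_le_one N hN x
  obtain ⟨h1, hD, hNum⟩ := core (lam2' N) (f N x) (deriv (f N) x) (deriv (deriv (f N)) x) x
    hl1 hl2 hx0 hx hFa hT0 hT1 hT2
  set l := lam2' N
  set F := f N x with hFdef
  set F1 := deriv (f N) x
  set F2 := deriv (deriv (f N)) x
  set D := l * (1 - F^2) - F1^2 with hDdef
  set Num := F2 * (1 - F^2) + F * F1^2 with hNumdef
  -- lower bound for S
  set S := (1 - F^2) ^ ((3:ℝ)/2) with hSdef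
  have hS1 : x^3/24 ≤ S := by
    have hmono : (x^2/8) ^ ((3:ℝ)/2) ≤ S := by
      exact Real.rpow_le_rpow (by positivity) h1 (by norm_num)
    refine le_trans ?_ hmono
    have hrw : (x^2/8) ^ ((3:ℝ)/2) = (x^2/8) * Real.sqrt (x^2/8) := by
      rw [show ((3:ℝ)/2) = 1 + 1/2 by norm_num, Real.rpow_add (by positivity), Real.rpow_one,
        Real.sqrt_eq_rpow]
    rw [hrw]
    have hsq : x/3 ≤ Real.sqrt (x^2/8) := by
      apply (Real.le_sqrt' (by positivity)).mpr
      nlinarith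
    calc x^3/24 = (x^2/8) * (x/3) := by ring
      _ ≤ (x^2/8) * Real.sqrt (x^2/8) := by
          apply mul_le_mul_of_nonneg_left hsq (by positivity)
  have hSpos : 0 < S := lt_of_lt_of_le (by positivity) hS1
  -- bound pieces
  have hA0 : 0 ≤ Real.sqrt (1 - R N x ^ 2) := Real.sqrt_nonneg _
  have hA1 : Real.sqrt (1 - R N x ^ 2) ≤ 1 := by
    calc Real.sqrt (1 - R N x ^ 2) ≤ Real.sqrt 1 :=
          Real.sqrt_le_sqrt (by nlinarith [sq_nonneg (R N x)])
      _ = 1 := Real.sqrt_one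
  have hDR : |D * R N x| ≤ 2 * x^4 := by
    by_cases hD0 : D = 0
    · rw [hD0, zero_mul, abs_zero]; positivity
    · have hre : D * R N x = Num := by
        show D * ((F2 * (1 - F ^ 2) + F * F1 ^ 2) / (l * (1 - F ^ 2) - F1 ^ 2)) = Num
        rw [← hDdef, ← hNumdef]
        exact mul_div_cancel₀ Num hD0
      rw [hre]; exact hNum
  have hB : |Real.arcsin (R N x)| ≤ π/2 :=
    abs_le.mpr ⟨Real.neg_pi_div_two_le_arcsin _, Real.arcsin_le_pi_div_two _⟩
  have hMeq : Mfun N x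
      = (D * Real.sqrt (1 - R N x ^ 2) + (D * R N x) * Real.arcsin (R N x)) / S := by
    show D / S * (Real.sqrt (1 - R N x ^ 2) + R N x * Real.arcsin (R N x)) = _
    field_simp
  rw [hMeq, abs_div, abs_of_pos hSpos]
  have hup : |D * Real.sqrt (1 - R N x ^ 2) + (D * R N x) * Real.arcsin (R N x)|
      ≤ x^4 + 2*x^4*(π/2) := by
    calc |D * Real.sqrt (1 - R N x ^ 2) + (D * R N x) * Real.arcsin (R N x)|
        ≤ |D * Real.sqrt (1 - R N x ^ 2)| + |(D * R N x) * Real.arcsin (R N x)| := abs_add_le _ _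
      _ ≤ x^4 + 2*x^4*(π/2) := by
          apply add_le_add
          · rw [abs_mul, abs_of_nonneg hA0]
            calc |D| * Real.sqrt (1 - R N x ^ 2) ≤ x^4 * 1 :=
                  mul_le_mul hD hA1 hA0 (by positivity)
              _ = x^4 := mul_one _
          · rw [abs_mul]
            exact mul_le_mul hDR hB (abs_nonneg _) (by positivity)
  have hpi := Real.pi_le_four
  have hpi0 := Real.pi_pos
  calc |D * Real.sqrt (1 - R N x ^ 2) + (D * R N x) * Real.arcsin (R N x)| / S
      ≤ (x^4 + 2*x^4*(π/2)) / S := by gcongr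
    _ ≤ (x^4 + 2*x^4*(π/2)) / (x^3/24) := by
        apply div_le_div_of_nonneg_left (by positivity) (by positivity) hS1
    _ = 24*(1 + π)*x := by field_simp
    _ ≤ 120 * x := by nlinarith

lemma f_zero (N : ℕ) (hN : 1 ≤ N) : f N 0 = 1 := by
  unfold f
  have : ∀ n ∈ Finset.Icc 1 N, Real.cos ((n : ℝ) * 0 / mval N) = 1 := by
    intro n _; rw [mul_zero, zero_div, Real.cos_zero]
  rw [Finset.sum_congr rfl this, Finset.sum_const, Nat.card_Icc]
  have hN0 : (N : ℝ) ≠ 0 := Nat.cast_ne_zero.mpr (by omega)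
  simp [nsmul_eq_mul]
  field_simp

lemma fd_zero (N : ℕ) : fd N 0 = 0 := by
  unfold fd
  have : ∀ n ∈ Finset.Icc 1 N, -(((n : ℝ) / mval N) * Real.sin ((n : ℝ) * 0 / mval N)) = 0 := by
    intro n _; rw [mul_zero, zero_div, Real.sin_zero, mul_zero, neg_zero]
  rw [Finset.sum_congr rfl this]
  simp

lemma Mfun_zero (N : ℕ) (hN : 1 ≤ N) : Mfun N 0 = 0 := by
  unfold Mfun
  rw [f_zero N hN, deriv_f, fd_zero]
  norm_num

lemma cont_f (N : ℕ) : Continuous (f N) := by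
  unfold f
  exact continuous_const.mul (continuous_finset_sum _ fun n _ =>
    Real.continuous_cos.comp (by fun_prop))

lemma cont_fd (N : ℕ) : Continuous (fd N) := by
  unfold fd
  exact continuous_const.mul (continuous_finset_sum _ fun n _ =>
    ((continuous_const.mul (Real.continuous_sin.comp (by fun_prop))).neg))

lemma cont_fdd (N : ℕ) : Continuous (fdd N) := by
  unfold fdd
  exact continuous_const.mul (continuous_finset_sum _ fun n _ =>
    ((continuous_const.mul (Real.continuous_cos.comp (by fun_prop))).neg))

lemma meas_Mfun (N : ℕ) : Measurable (Mfun N) := by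
  have hc1 : Continuous (f N) := cont_f N
  have hc2 : Continuous (deriv (f N)) := by rw [deriv_f]; exact cont_fd N
  have hc3 : Continuous (deriv (deriv (f N))) := by rw [deriv2_f]; exact cont_fdd N
  have hden : Continuous (fun x => lam2' N * (1 - f N x ^ 2) - deriv (f N) x ^ 2) :=
    (continuous_const.mul (continuous_const.sub (hc1.pow 2))).sub (hc2.pow 2)
  have hnum : Continuous
      (fun x => deriv (deriv (f N)) x * (1 - f N x ^ 2) + f N x * deriv (f N) x ^ 2) :=
    (hc3.mul (continuous_const.sub (hc1.pow 2))).add (hc1.mul (hc2.pow 2))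
  have hRm : Measurable (R N) := by
    unfold R; exact hnum.measurable.div hden.measurable
  have hS : Continuous (fun x => (1 - f N x ^ 2) ^ ((3:ℝ)/2)) :=
    (Real.continuous_rpow_const (by norm_num)).comp (continuous_const.sub (hc1.pow 2))
  unfold Mfun
  exact (hden.measurable.div hS.measurable).mul
    (((Real.continuous_sqrt.measurable).comp (measurable_const.sub (hRm.pow_const 2))).add
      (hRm.mul (Real.continuous_arcsin.measurable.comp hRm)))

/-- there are universal constants `δ₀ > 0` and `C > 0` such that for every
`N ≥ 1` and every `0 < δ < δ₀` one has `∫₀^δ M(x) dx = O(δ²)`, i.e.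
`|∫₀^δ M(x) dx| ≤ C·δ²`. -/
theorem integral_near_origin_small :
    ∃ δ₀ > (0 : ℝ), ∃ C > (0 : ℝ), ∀ N : ℕ, 1 ≤ N → ∀ δ : ℝ, 0 < δ → δ < δ₀ →
      |∫ x in (0 : ℝ)..δ, Mfun N x| ≤ C * δ ^ 2 := by
  refine ⟨1/10, by norm_num, 100, by norm_num, ?_⟩
  intro N hN δ hδ0 hδ1
  have hδ10 : δ ≤ 1/10 := hδ1.le
  have hMint : IntervalIntegrable (Mfun N) volume 0 δ := by
    rw [intervalIntegrable_iff_integrableOn_Ioc_of_le hδ0.le]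
    apply Integrable.mono' (g := fun _ => 120 * δ) (integrable_const _)
      ((meas_Mfun N).aestronglyMeasurable.restrict)
    filter_upwards [ae_restrict_mem measurableSet_Ioc] with y hy
    rw [Real.norm_eq_abs]
    have := Mfun_bound N hN y hy.1 (hy.2.trans hδ10)
    have : 120 * y ≤ 120 * δ := by linarith [hy.2]
    linarith [Mfun_bound N hN y hy.1 (hy.2.trans hδ10)]
  have habs : |∫ x in (0:ℝ)..δ, Mfun N x| ≤ ∫ x in (0:ℝ)..δ, |Mfun N x| :=
    intervalIntegral.abs_integral_le_integral_abs hδ0.le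
  have hcmp : (∫ x in (0:ℝ)..δ, |Mfun N x|) ≤ ∫ x in (0:ℝ)..δ, 120 * x := by
    apply intervalIntegral.integral_mono_on hδ0.le hMint.abs
      ((continuous_const.mul continuous_id).intervalIntegrable _ _)
    intro y hy
    rcases eq_or_lt_of_le hy.1 with h0 | h0
    · rw [← h0, Mfun_zero N hN, abs_zero]; norm_num
    · exact Mfun_bound N hN y h0 (hy.2.trans hδ10)
  have hval : (∫ x in (0:ℝ)..δ, 120 * x) = 60 * δ ^ 2 := by
    rw [intervalIntegral.integral_const_mul, integral_id]; ring
  have : |∫ x in (0:ℝ)..δ, Mfun N x| ≤ 60 * δ ^ 2 := by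
    rw [hval] at hcmp; linarith
  nlinarith [sq_nonneg δ]
end

section
/- There exists a universal constant C > 0 such that for every integer N ≥ 1 (with m = N + 1/2) and every x with 0 < x ≤ πm: |f(x) − g(x)| ≤ C/m and |f'(x) − g'(x)| ≤ C·( x/m² + 1/(m·x) ); moreover for 0 < x < 1 one has the sharper bound |f'(x) − g'(x)| ≤ C·x/m. -/
open MeasureTheory Filter Real Topology

/-- `g(x) = sin x / x`. -/
noncomputable def g (x : ℝ) : ℝ := Real.sin x / x




lemma sum_cos_eq (N : ℕ) (t : ℝ) :
    2 * Real.sin (t / 2) * ∑ n ∈ Finset.Icc 1 N, Real.cos (n * t)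
      = Real.sin (((N : ℝ) + 1 / 2) * t) - Real.sin (t / 2) := by
  induction N with
  | zero =>
    rw [show (((0 : ℕ) : ℝ) + 1 / 2) * t = t / 2 by push_cast; ring]
    simp
  | succ k ih =>
    rw [Finset.sum_Icc_succ_top (by omega : 1 ≤ k + 1)]
    have h := Real.sin_sub_sin (((k : ℝ) + 1 + 1 / 2) * t) (((k : ℝ) + 1 / 2) * t)
    have e1 : ((((k : ℝ) + 1 + 1 / 2) * t - ((k : ℝ) + 1 / 2) * t) / 2) = t / 2 := by ring
    have e2 : ((((k : ℝ) + 1 + 1 / 2) * t + ((k : ℝ) + 1 / 2) * t) / 2) = ((k : ℝ) + 1) * t := by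
      ring
    rw [e1, e2] at h
    push_cast
    linear_combination ih - h

lemma jordan {s : ℝ} (h0 : 0 ≤ s) (h1 : s ≤ π / 2) : s / 2 ≤ Real.sin s := by
  have h := Real.mul_le_sin h0 h1
  have hπ : π ≤ 4 := Real.pi_le_four
  have hπ0 : 0 < π := Real.pi_pos
  have hsnn : 0 ≤ Real.sin s := Real.sin_nonneg_of_nonneg_of_le_pi h0 (by linarith)
  have h2 : 2 * s ≤ Real.sin s * π := by
    rwa [div_mul_eq_mul_div, div_le_iff₀ hπ0] at h
  nlinarith

lemma sub_sin_le {s : ℝ} (h0 : 0 ≤ s) (h1 : s ≤ π / 2) : s - Real.sin s ≤ s ^ 3 / 2 := by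
  rcases le_or_gt s 1 with hs | hs
  · rcases eq_or_lt_of_le h0 with rfl | h0'
    · simp
    · have := Real.sin_gt_sub_cube h0'
      linarith [pow_nonneg h0 3]
  · have := jordan h0 h1
    have hs3 : s ≤ s ^ 3 := by
      nlinarith [mul_nonneg (le_of_lt (lt_trans zero_lt_one hs))
        (show (0:ℝ) ≤ s ^ 2 - 1 by nlinarith)]
    linarith

lemma quart_bound {s : ℝ} (h0 : 0 ≤ s) (h1 : s ≤ π / 2) :
    |s ^ 2 * Real.cos s - Real.sin s ^ 2| ≤ s ^ 4 := by
  have hsle : Real.sin s ≤ s := Real.sin_le h0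
  have hsnn : 0 ≤ Real.sin s := Real.sin_nonneg_of_nonneg_of_le_pi h0 (by linarith [Real.pi_pos])
  have hcle : Real.cos s ≤ 1 := Real.cos_le_one s
  have hcge : 1 - s ^ 2 / 2 ≤ Real.cos s := Real.one_sub_sq_div_two_le_cos
  have hcube := sub_sin_le h0 h1
  rw [abs_le]
  constructor <;> nlinarith [sq_nonneg s, sq_nonneg (Real.sin s)]

lemma f_closed (N : ℕ) (hN : 1 ≤ N) {y : ℝ} (h0 : 0 < y) (h2 : y < 2 * π * mval N) :
    f N y = (Real.sin y - Real.sin (y / (2 * mval N))) / (2 * N * Real.sin (y / (2 * mval N))) := by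
  have hM0 : (0:ℝ) < mval N := by
    have : (0:ℝ) ≤ (N:ℝ) := Nat.cast_nonneg N
    unfold mval; linarith
  have hN0 : (0:ℝ) < N := by exact_mod_cast hN
  have hs0 : 0 < y / (2 * mval N) := div_pos h0 (by linarith)
  have hsπ : y / (2 * mval N) < π := by
    rw [div_lt_iff₀ (by linarith)]
    calc y < 2 * π * mval N := h2
    _ = π * (2 * mval N) := by ring
  have hsin : 0 < Real.sin (y / (2 * mval N)) := Real.sin_pos_of_pos_of_lt_pi hs0 hsπ
  have hsum := sum_cos_eq N (y / mval N)
  have e1 : ((N : ℝ) + 1 / 2) * (y / mval N) = y := by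
    unfold mval
    field_simp
  have e2 : y / mval N / 2 = y / (2 * mval N) := by ring
  rw [e1, e2] at hsum
  have hS : ∑ n ∈ Finset.Icc 1 N, Real.cos ((n : ℝ) * (y / mval N))
      = (Real.sin y - Real.sin (y / (2 * mval N))) / (2 * Real.sin (y / (2 * mval N))) := by
    rw [eq_div_iff (by linarith : 2 * Real.sin (y / (2 * mval N)) ≠ 0)]
    linear_combination hsum
  simp only [f, mul_div_assoc]
  rw [hS, div_mul_div_comm, one_mul]
  rw [show (N:ℝ) * (2 * Real.sin (y / (2 * mval N))) = 2 * N * Real.sin (y / (2 * mval N)) by ring]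

set_option maxHeartbeats 2000000 in
/-- there is a universal `C > 0` such that for every `N ≥ 1` (with `m = N + 1/2`)
and every `0 < x ≤ πm`: `|f(x) − g(x)| ≤ C/m` and
`|f'(x) − g'(x)| ≤ C·(x/m² + 1/(m·x))`; moreover for `0 < x < 1`,
`|f'(x) − g'(x)| ≤ C·x/m`. -/
theorem f_approximates_g :
    ∃ C > (0 : ℝ), ∀ N : ℕ, 1 ≤ N → ∀ x : ℝ, 0 < x → x ≤ π * mval N →
      |f N x - g x| ≤ C / mval N ∧
      |deriv (f N) x - deriv g x| ≤ C * (x / mval N ^ 2 + 1 / (mval N * x)) ∧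
      (x < 1 → |deriv (f N) x - deriv g x| ≤ C * x / mval N) := by
  refine ⟨100, by norm_num, ?_⟩
  intro N hN x hx0 hxpi
  have hπ0 : 0 < π := Real.pi_pos
  have hπ4 : π ≤ 4 := Real.pi_le_four
  have hN1 : (1:ℝ) ≤ (N:ℝ) := by exact_mod_cast hN
  have hMdef : mval N = (N:ℝ) + 1/2 := rfl
  have hM0 : (0:ℝ) < mval N := by rw [hMdef]; linarith
  have hM32 : (3:ℝ)/2 ≤ mval N := by rw [hMdef]; linarith
  have hMN : mval N ≤ (3/2) * N := by rw [hMdef]; linarith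
  have hN0 : (0:ℝ) < (N:ℝ) := by linarith
  obtain ⟨s, hs⟩ : ∃ s : ℝ, s = x / (2 * mval N) := ⟨_, rfl⟩
  have hs0 : 0 < s := by rw [hs]; exact div_pos hx0 (by linarith)
  have hsle : s ≤ π / 2 := by
    rw [hs, div_le_iff₀ (by linarith : (0:ℝ) < 2 * mval N)]
    calc x ≤ π * mval N := hxpi
    _ = π / 2 * (2 * mval N) := by ring
  have hsππ : s < π := lt_of_le_of_lt hsle (by linarith)
  have hsinpos : 0 < Real.sin s := Real.sin_pos_of_pos_of_lt_pi hs0 hsππ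
  have hsin2 : s / 2 ≤ Real.sin s := jordan hs0.le hsle
  have hsinle : Real.sin s ≤ s := Real.sin_le hs0.le
  have hcube : s - Real.sin s ≤ s ^ 3 / 2 := sub_sin_le hs0.le hsle
  have hquart : |s ^ 2 * Real.cos s - Real.sin s ^ 2| ≤ s ^ 4 := quart_bound hs0.le hsle
  have hxs : x = (2 * (N:ℝ) + 1) * s := by
    rw [hs, hMdef]; field_simp
  have hs2 : s ≤ 2 := by linarith
  have hxlt : x < 2 * π * mval N := by nlinarith
  have hfval : f N x = (Real.sin x - Real.sin s) / (2 * N * Real.sin s) := by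
    rw [hs]; exact f_closed N hN hx0 hxlt
  have hdiff : f N x - g x
      = Real.sin x * (s - Real.sin s) / (2 * N * s * Real.sin s)
        + (Real.sin x / x - 1) / (2 * N) := by
    rw [hfval]; simp only [g]
    rw [hxs]
    field_simp
    ring
  have hb1 : |Real.sin x * (s - Real.sin s) / (2 * N * s * Real.sin s)| ≤ 2 / mval N := by
    have hdpos : 0 < 2 * (N:ℝ) * s * Real.sin s :=
      mul_pos (mul_pos (by linarith : (0:ℝ) < 2 * (N:ℝ)) hs0) hsinpos
    rw [abs_div, abs_of_pos hdpos, abs_mul]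
    have hnum : |Real.sin x| * |s - Real.sin s| ≤ s ^ 3 / 2 := by
      rw [abs_of_nonneg (by linarith : (0:ℝ) ≤ s - Real.sin s)]
      calc |Real.sin x| * (s - Real.sin s) ≤ 1 * (s ^ 3 / 2) :=
        mul_le_mul (Real.abs_sin_le_one x) hcube (by linarith) zero_le_one
      _ = s ^ 3 / 2 := one_mul _
    have hden : (N:ℝ) * s ^ 2 ≤ 2 * N * s * Real.sin s := by
      linarith [mul_le_mul_of_nonneg_left hsin2
        (mul_nonneg (show (0:ℝ) ≤ 2 * (N:ℝ) by linarith) hs0.le)]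
    calc |Real.sin x| * |s - Real.sin s| / (2 * N * s * Real.sin s)
        ≤ (s ^ 3 / 2) / ((N:ℝ) * s ^ 2) :=
          div_le_div₀ (by positivity) hnum (mul_pos hN0 (pow_pos hs0 2)) hden
    _ = s / (2 * N) := by field_simp
    _ ≤ 2 / mval N := by
        rw [div_le_div_iff₀ (by linarith : (0:ℝ) < 2 * (N:ℝ)) hM0]
        nlinarith [mul_nonneg (by linarith : (0:ℝ) ≤ 2 - s) (by linarith : (0:ℝ) ≤ mval N)]
  have hsinx_div : |Real.sin x / x| ≤ 1 := by
    rw [abs_div, div_le_one (by positivity)]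
    exact Real.abs_sin_le_abs
  have hb2 : |(Real.sin x / x - 1) / (2 * N)| ≤ 3 / (2 * mval N) := by
    have h2 : |Real.sin x / x - 1| ≤ 2 := by
      calc |Real.sin x / x - 1| ≤ |Real.sin x / x| + |(1:ℝ)| := abs_sub _ _
      _ ≤ 1 + 1 := by rw [abs_one]; linarith
      _ = 2 := by norm_num
    rw [abs_div, abs_of_pos (by linarith : (0:ℝ) < 2 * (N:ℝ))]
    calc |Real.sin x / x - 1| / (2 * (N:ℝ))
        ≤ 2 / (2 * (N:ℝ)) := div_le_div₀ (by norm_num) h2 (by linarith) (le_refl _)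
    _ = 1 / (N:ℝ) := by field_simp
    _ ≤ 3 / (2 * mval N) := by
        rw [div_le_div_iff₀ hN0 (by linarith : (0:ℝ) < 2 * mval N)]
        linarith
  refine ⟨?_, ?_⟩
  · rw [hdiff]
    calc |Real.sin x * (s - Real.sin s) / (2 * N * s * Real.sin s)
          + (Real.sin x / x - 1) / (2 * N)|
        ≤ |Real.sin x * (s - Real.sin s) / (2 * N * s * Real.sin s)|
          + |(Real.sin x / x - 1) / (2 * N)| := abs_add_le _ _
    _ ≤ 2 / mval N + 3 / (2 * mval N) := add_le_add hb1 hb2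
    _ = (7/2) / mval N := by ring
    _ ≤ 100 / mval N := div_le_div₀ (by norm_num) (by norm_num) hM0 (le_refl _)
  -- derivative of g
  have hdg : deriv g x = (Real.cos x * x - Real.sin x) / x ^ 2 := by
    have hg : HasDerivAt (fun y : ℝ => Real.sin y / y)
        ((Real.cos x * x - Real.sin x * 1) / x ^ 2) x :=
      (Real.hasDerivAt_sin x).div (hasDerivAt_id x) hx0.ne'
    have h2 : deriv g x = (Real.cos x * x - Real.sin x * 1) / x ^ 2 := hg.deriv
    rw [h2]; ring
  -- derivative of f
  have hinner : HasDerivAt (fun y : ℝ => Real.sin (y / (2 * mval N)))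
      (Real.cos (x / (2 * mval N)) * (1 / (2 * mval N))) x := by
    have h1 : HasDerivAt (fun y : ℝ => y / (2 * mval N)) (1 / (2 * mval N)) x := by
      simpa using (hasDerivAt_id x).div_const (2 * mval N)
    have := (Real.hasDerivAt_sin (x / (2 * mval N))).comp x h1
    exact this
  have hu : HasDerivAt (fun y : ℝ => Real.sin y - Real.sin (y / (2 * mval N)))
      (Real.cos x - Real.cos (x / (2 * mval N)) * (1 / (2 * mval N))) x :=
    (Real.hasDerivAt_sin x).sub hinner
  have hv : HasDerivAt (fun y : ℝ => 2 * (N:ℝ) * Real.sin (y / (2 * mval N)))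
      (2 * (N:ℝ) * (Real.cos (x / (2 * mval N)) * (1 / (2 * mval N)))) x := by
    simpa using hinner.const_mul (2 * (N:ℝ))
  have hvpos : 0 < 2 * (N:ℝ) * Real.sin (x / (2 * mval N)) := by
    rw [← hs]; exact mul_pos (by linarith : (0:ℝ) < 2 * (N:ℝ)) hsinpos
  have hF := hu.div hv hvpos.ne'
  have hev : f N =ᶠ[nhds x] (fun y : ℝ =>
      (Real.sin y - Real.sin (y / (2 * mval N))) / (2 * N * Real.sin (y / (2 * mval N)))) := by
    filter_upwards [Ioo_mem_nhds hx0 hxlt] with y hy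
    exact f_closed N hN hy.1 hy.2
  have hdf : deriv (f N) x
      = ((Real.cos x - Real.cos s * (1 / (2 * mval N))) * (2 * N * Real.sin s)
          - (Real.sin x - Real.sin s) * (2 * N * (Real.cos s * (1 / (2 * mval N)))))
        / (2 * N * Real.sin s) ^ 2 := by
    rw [hev.deriv_eq, hs]
    exact hF.deriv
  -- decomposition of the derivative difference
  have hkey : deriv (f N) x - deriv g x
      = (x * Real.cos x - Real.sin x) / x ^ 2 / (2 * N)
        + Real.cos x * ((s - Real.sin s) / (2 * N * s * Real.sin s))
        - Real.sin x * ((s ^ 2 * Real.cos s - Real.sin s ^ 2)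
            / (4 * N * mval N * s ^ 2 * Real.sin s ^ 2)) := by
    rw [hdf, hdg, hMdef, hxs]
    have h1 : ((N:ℝ) + 1/2) ≠ 0 := by linarith
    have h2 : (2 * (N:ℝ) + 1) ≠ 0 := by linarith
    field_simp
    ring
  -- bounds on the three terms
  have habs_sinx_x : |Real.sin x| ≤ x := by
    have := Real.abs_sin_le_abs (x := x)
    rwa [abs_of_pos hx0] at this
  have hT1 : |Real.cos x * ((s - Real.sin s) / (2 * N * s * Real.sin s))| ≤ x / mval N ^ 2 := by
    rw [← mul_div_assoc, abs_div]
    have hdpos : 0 < 2 * (N:ℝ) * s * Real.sin s :=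
      mul_pos (mul_pos (by linarith : (0:ℝ) < 2 * (N:ℝ)) hs0) hsinpos
    have hnum : |Real.cos x * (s - Real.sin s)| ≤ s ^ 3 / 2 := by
      rw [abs_mul, abs_of_nonneg (by linarith : (0:ℝ) ≤ s - Real.sin s)]
      calc |Real.cos x| * (s - Real.sin s) ≤ 1 * (s ^ 3 / 2) :=
        mul_le_mul (Real.abs_cos_le_one x) hcube (by linarith) zero_le_one
      _ = s ^ 3 / 2 := one_mul _
    have hden : (N:ℝ) * s ^ 2 ≤ 2 * N * s * Real.sin s := by
      linarith [mul_le_mul_of_nonneg_left hsin2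
        (mul_nonneg (show (0:ℝ) ≤ 2 * (N:ℝ) by linarith) hs0.le)]
    calc |Real.cos x * (s - Real.sin s)| / |2 * ↑N * s * Real.sin s|
        = |Real.cos x * (s - Real.sin s)| / (2 * ↑N * s * Real.sin s) := by
          rw [abs_of_pos hdpos]
    _ ≤ (s ^ 3 / 2) / ((N:ℝ) * s ^ 2) :=
        div_le_div₀ (by positivity) hnum (mul_pos hN0 (pow_pos hs0 2)) hden
    _ ≤ x / mval N ^ 2 := by
        rw [div_le_div_iff₀ (mul_pos hN0 (pow_pos hs0 2)) (pow_pos hM0 2), hxs, hMdef]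
        linarith [mul_nonneg (pow_nonneg hs0.le 3)
          (mul_nonneg (show (0:ℝ) ≤ (N:ℝ) + 1/2 by linarith)
            (show (0:ℝ) ≤ 3 * (N:ℝ) - 1/2 by linarith))]
  have hT2 : |Real.sin x * ((s ^ 2 * Real.cos s - Real.sin s ^ 2)
      / (4 * N * mval N * s ^ 2 * Real.sin s ^ 2))| ≤ 2 * (x / mval N ^ 2) := by
    rw [← mul_div_assoc, abs_div]
    have hdpos : 0 < 4 * (N:ℝ) * mval N * s ^ 2 * Real.sin s ^ 2 := by
      have := mul_pos (mul_pos (mul_pos (mul_pos (by norm_num : (0:ℝ) < 4) hN0) hM0)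
        (pow_pos hs0 2)) (pow_pos hsinpos 2)
      exact this
    have hnum : |Real.sin x * (s ^ 2 * Real.cos s - Real.sin s ^ 2)| ≤ x * s ^ 4 := by
      rw [abs_mul]
      exact mul_le_mul habs_sinx_x hquart (abs_nonneg _) hx0.le
    have hden : (N:ℝ) * mval N * s ^ 4 ≤ 4 * N * mval N * s ^ 2 * Real.sin s ^ 2 := by
      have hsq : s ^ 2 / 4 ≤ Real.sin s ^ 2 := by
        nlinarith [mul_nonneg (show (0:ℝ) ≤ Real.sin s - s/2 by linarith)
          (show (0:ℝ) ≤ Real.sin s + s/2 by linarith)]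
      have hc : (0:ℝ) ≤ 4 * (N:ℝ) * mval N * s ^ 2 :=
        mul_nonneg (mul_nonneg (mul_nonneg (by norm_num) hN0.le) hM0.le) (sq_nonneg s)
      linarith [mul_le_mul_of_nonneg_left hsq hc]
    calc |Real.sin x * (s ^ 2 * Real.cos s - Real.sin s ^ 2)|
          / |4 * ↑N * mval N * s ^ 2 * Real.sin s ^ 2|
        = |Real.sin x * (s ^ 2 * Real.cos s - Real.sin s ^ 2)|
          / (4 * ↑N * mval N * s ^ 2 * Real.sin s ^ 2) := by rw [abs_of_pos hdpos]
    _ ≤ (x * s ^ 4) / ((N:ℝ) * mval N * s ^ 4) :=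
        div_le_div₀ (by positivity) hnum
          (mul_pos (mul_pos hN0 hM0) (pow_pos hs0 4)) hden
    _ ≤ 2 * (x / mval N ^ 2) := by
        rw [show 2 * (x / mval N ^ 2) = (2 * x) / mval N ^ 2 by ring,
          div_le_div_iff₀ (mul_pos (mul_pos hN0 hM0) (pow_pos hs0 4)) (pow_pos hM0 2)]
        linarith [mul_nonneg (mul_nonneg (mul_nonneg hx0.le (pow_nonneg hs0.le 4)) hM0.le)
          (show (0:ℝ) ≤ 2 * (N:ℝ) - mval N by rw [hMdef]; linarith)]
  have htri : ∀ a b c : ℝ, |a + b - c| ≤ |a| + |b| + |c| := by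
    intro a b c
    calc |a + b - c| = |a + b + -c| := by ring_nf
    _ ≤ |a| + |b| + |-c| := abs_add_three _ _ _
    _ = |a| + |b| + |c| := by rw [abs_neg]
  refine ⟨?_, ?_⟩
  · -- general derivative bound
    have hT0 : |(x * Real.cos x - Real.sin x) / x ^ 2 / (2 * N)|
        ≤ (3/2) * (1 / (mval N * x)) := by
      rw [div_div]
      have hnum : |x * Real.cos x - Real.sin x| ≤ 2 * x := by
        have h1 : |x * Real.cos x| ≤ x := by
          rw [abs_mul, abs_of_pos hx0]
          nlinarith [Real.abs_cos_le_one x, abs_nonneg (Real.cos x)]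
        calc |x * Real.cos x - Real.sin x| ≤ |x * Real.cos x| + |Real.sin x| := abs_sub _ _
        _ ≤ 2 * x := by linarith
      have hdpos : 0 < x ^ 2 * (2 * (N:ℝ)) :=
        mul_pos (pow_pos hx0 2) (by linarith : (0:ℝ) < 2 * (N:ℝ))
      rw [abs_div, abs_of_pos hdpos]
      calc |x * Real.cos x - Real.sin x| / (x ^ 2 * (2 * ↑N))
          ≤ (2 * x) / (x ^ 2 * (2 * ↑N)) :=
            div_le_div₀ (by positivity) hnum hdpos (le_refl _)
      _ ≤ (3/2) * (1 / (mval N * x)) := by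
          rw [show (3/2) * (1 / (mval N * x)) = 3 / (2 * (mval N * x)) by ring,
            div_le_div_iff₀ hdpos (by positivity)]
          linarith [mul_nonneg (sq_nonneg x)
            (show (0:ℝ) ≤ 3 * (N:ℝ) - 2 * mval N by linarith)]
    rw [hkey]
    calc |(x * Real.cos x - Real.sin x) / x ^ 2 / (2 * N)
          + Real.cos x * ((s - Real.sin s) / (2 * N * s * Real.sin s))
          - Real.sin x * ((s ^ 2 * Real.cos s - Real.sin s ^ 2)
              / (4 * N * mval N * s ^ 2 * Real.sin s ^ 2))|
        ≤ (3/2) * (1 / (mval N * x)) + x / mval N ^ 2 + 2 * (x / mval N ^ 2) := by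
          have := htri ((x * Real.cos x - Real.sin x) / x ^ 2 / (2 * N))
            (Real.cos x * ((s - Real.sin s) / (2 * N * s * Real.sin s)))
            (Real.sin x * ((s ^ 2 * Real.cos s - Real.sin s ^ 2)
              / (4 * N * mval N * s ^ 2 * Real.sin s ^ 2)))
          linarith [hT0, hT1, hT2]
    _ ≤ 100 * (x / mval N ^ 2 + 1 / (mval N * x)) := by
        have p1 : 0 ≤ x / mval N ^ 2 := div_nonneg hx0.le (pow_nonneg hM0.le 2)
        have p2 : 0 ≤ 1 / (mval N * x) := div_nonneg zero_le_one (mul_nonneg hM0.le hx0.le)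
        linarith
  · -- refined bound for small x
    intro hx1
    have hT0 : |(x * Real.cos x - Real.sin x) / x ^ 2 / (2 * N)| ≤ (1/2) * (x / mval N) := by
      rw [div_div]
      have hsinxgt : x - x ^ 3 / 4 < Real.sin x := by linarith [Real.sin_gt_sub_cube hx0, pow_pos hx0 3]
      have hcosxge : 1 - x ^ 2 / 2 ≤ Real.cos x := Real.one_sub_sq_div_two_le_cos
      have hcosxle : Real.cos x ≤ 1 := Real.cos_le_one x
      have hsinxle : Real.sin x ≤ x := Real.sin_le hx0.le
      have hnum : |x * Real.cos x - Real.sin x| ≤ x ^ 3 / 2 := by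
        rw [abs_le]
        constructor
        · linarith [mul_le_mul_of_nonneg_left hcosxge hx0.le, hsinxle]
        · linarith [mul_le_mul_of_nonneg_left hcosxle hx0.le, hsinxgt,
            pow_nonneg hx0.le 3]
      have hdpos : 0 < x ^ 2 * (2 * (N:ℝ)) :=
        mul_pos (pow_pos hx0 2) (by linarith : (0:ℝ) < 2 * (N:ℝ))
      rw [abs_div, abs_of_pos hdpos]
      calc |x * Real.cos x - Real.sin x| / (x ^ 2 * (2 * ↑N))
          ≤ (x ^ 3 / 2) / (x ^ 2 * (2 * ↑N)) :=
            div_le_div₀ (by positivity) hnum hdpos (le_refl _)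
      _ ≤ (1/2) * (x / mval N) := by
          rw [show (1/2) * (x / mval N) = x / (2 * mval N) by ring,
            div_le_div_iff₀ hdpos (by linarith : (0:ℝ) < 2 * mval N)]
          linarith [mul_le_mul_of_nonneg_right hMN (pow_nonneg hx0.le 3),
            mul_nonneg hN0.le (pow_nonneg hx0.le 3)]
    have hMM : x / mval N ^ 2 ≤ x / mval N :=
      div_le_div_of_nonneg_left hx0.le hM0
        (by nlinarith [hM32])
    rw [hkey]
    have h := htri ((x * Real.cos x - Real.sin x) / x ^ 2 / (2 * N))
      (Real.cos x * ((s - Real.sin s) / (2 * N * s * Real.sin s)))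
      (Real.sin x * ((s ^ 2 * Real.cos s - Real.sin s ^ 2)
        / (4 * N * mval N * s ^ 2 * Real.sin s ^ 2)))
    have e : 100 * x / mval N = 100 * (x / mval N) := by ring
    have p1 : 0 ≤ x / mval N := div_nonneg hx0.le hM0.le
    rw [e]
    linarith [hT0, hT1, hT2]
end

section
/- Let I = [a,b] be an interval, A > 0, and h : I → ℝ a function satisfying |h(x) − h(y)| ≤ A·|x − y| for all x, y ∈ I. If b − a > (max_{x∈I}|h(x)|)/(2A), then for every x ∈ I one has |h(x)| ≤ 2·A^{1/3}·‖h‖_{L²(I)}^{2/3}. -/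
open MeasureTheory Real

/-- if `h` is `A`-Lipschitz on `I = [a,b]` and
`b − a > (max_{x∈I}|h(x)|)/(2A)`, then `|h(x)| ≤ 2·A^{1/3}·‖h‖_{L²(I)}^{2/3}` for every
`x ∈ I`, where `‖h‖_{L²(I)} = (∫_a^b h(x)² dx)^{1/2}`. -/
theorem sup_bound_from_L2_bound_of_lipschitz
    (a b A : ℝ) (hA : 0 < A) (h : ℝ → ℝ)
    (hLip : ∀ x ∈ Set.Icc a b, ∀ y ∈ Set.Icc a b, |h x - h y| ≤ A * |x - y|)
    (hgap : sSup ((fun x => |h x|) '' Set.Icc a b) / (2 * A) < b - a) :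
    ∀ x ∈ Set.Icc a b,
      |h x| ≤ 2 * A ^ ((1 : ℝ) / 3) * (Real.sqrt (∫ t in a..b, h t ^ 2)) ^ ((2 : ℝ) / 3) := by
  intro x hx
  have hab : a ≤ b := le_trans hx.1 hx.2
  set M : ℝ := sSup ((fun x => |h x|) '' Set.Icc a b) with hM
  -- continuity of h on Icc
  have hcont : ContinuousOn h (Set.Icc a b) := by
    apply LipschitzOnWith.continuousOn (K := ⟨A, hA.le⟩)
    intro p hp q hq
    rw [edist_dist, edist_dist]
    simp only [Real.dist_eq]
    refine le_of_le_of_eq (b := ENNReal.ofReal A * ENNReal.ofReal |p - q|) ?_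
      (congrArg (· * ENNReal.ofReal |p - q|) (ENNReal.ofReal_coe_nnreal (p := ⟨A, hA.le⟩)))
    rw [← ENNReal.ofReal_mul (by positivity)]
    exact ENNReal.ofReal_le_ofReal (hLip p hp q hq)
  have hcompact : IsCompact ((fun x => |h x|) '' Set.Icc a b) :=
    isCompact_Icc.image_of_continuousOn hcont.abs
  have hne : ((fun x => |h x|) '' Set.Icc a b).Nonempty := ⟨|h x|, x, hx, rfl⟩
  have hMmem : M ∈ (fun x => |h x|) '' Set.Icc a b := hcompact.sSup_mem hne
  obtain ⟨x₀, hx₀, hhx₀⟩ := hMmem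
  have hxM : |h x| ≤ M := le_csSup hcompact.bddAbove ⟨x, hx, rfl⟩
  have hM0 : 0 ≤ M := le_trans (abs_nonneg _) hxM
  set I : ℝ := ∫ t in a..b, h t ^ 2 with hI
  have hInt : IntervalIntegrable (fun t => h t ^ 2) volume a b := by
    apply ContinuousOn.intervalIntegrable
    rw [Set.uIcc_of_le hab]
    exact hcont.pow 2
  have hI0 : 0 ≤ I := intervalIntegral.integral_nonneg hab (fun t _ => sq_nonneg _)
  -- rewrite RHS
  have hRHS : (Real.sqrt I) ^ ((2 : ℝ) / 3) = I ^ ((1 : ℝ) / 3) := by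
    rw [Real.sqrt_eq_rpow, ← Real.rpow_mul hI0]
    norm_num
  rw [hRHS]
  -- key: M ^ 3 ≤ 8 * A * I
  have hkey : M ^ 3 ≤ 8 * A * I := by
    have hAne : A ≠ 0 := hA.ne'
    have hhx₀' : |h x₀| = M := hhx₀
    rcases eq_or_lt_of_le hM0 with hM0' | hMpos
    · rw [← hM0']; norm_num; positivity
    -- gap: M / (2*A) < b - a
    have hgap' : M / (2 * A) < b - a := hgap
    set L : ℝ := M / (4 * A) with hL
    have hLpos : 0 < L := by positivity
    have h2L : 2 * L < b - a := by
      have e : 2 * L = M / (2 * A) := by rw [hL]; field_simp; ring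
      rw [e]; exact hgap'
    -- choose subinterval [c, c+L] ⊆ [a,b] with all points within L of x₀
    obtain ⟨c, hc1, hc2, hc3⟩ : ∃ c, a ≤ c ∧ c + L ≤ b ∧ ∀ t ∈ Set.Icc c (c + L), |t - x₀| ≤ L := by
      rcases le_or_gt (x₀ + L) b with hcase | hcase
      · exact ⟨x₀, hx₀.1, hcase, fun t ht => by
          rw [abs_le]; constructor <;> [linarith [ht.1]; linarith [ht.2]]⟩
      · refine ⟨x₀ - L, ?_, by linarith [hx₀.2], fun t ht => by
          rw [abs_le]; constructor <;> [linarith [ht.1]; linarith [ht.2]]⟩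
        linarith [hx₀.2]
    -- on [c, c+L], h t ^ 2 ≥ (3M/4)^2
    have hsub : Set.Icc c (c + L) ⊆ Set.Icc a b :=
      Set.Icc_subset_Icc hc1 hc2
    have hlow : ∀ t ∈ Set.Icc c (c + L), (3 * M / 4) ^ 2 ≤ h t ^ 2 := by
      intro t ht
      have h1 : |h x₀ - h t| ≤ A * |x₀ - t| := hLip x₀ hx₀ t (hsub ht)
      have h2 : A * |x₀ - t| ≤ A * L := by
        apply mul_le_mul_of_nonneg_left _ hA.le
        rw [abs_sub_comm]; exact hc3 t ht
      have h3 : A * L = M / 4 := by rw [hL]; field_simp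
      have h4 : M - M / 4 ≤ |h t| := by
        have := abs_sub_abs_le_abs_sub (h x₀) (h t)
        rw [hhx₀'] at this
        linarith
      have h5 : 3 * M / 4 ≤ |h t| := by linarith
      calc (3 * M / 4) ^ 2 ≤ |h t| ^ 2 := by
            apply pow_le_pow_left₀ (by linarith) h5
        _ = h t ^ 2 := sq_abs _
    have hstep1 : (∫ t in c..(c + L), h t ^ 2) ≤ I := by
      apply intervalIntegral.integral_mono_interval hc1 (by linarith) hc2
      · filter_upwards with t using sq_nonneg _
      · exact hInt
    have hstep2 : (∫ t in c..(c + L), (3 * M / 4) ^ 2) ≤ ∫ t in c..(c + L), h t ^ 2 := by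
      apply intervalIntegral.integral_mono_on (by linarith) intervalIntegrable_const
        (hInt.mono_set (by rw [Set.uIcc_of_le hab, Set.uIcc_of_le (by linarith)]; exact hsub))
      exact hlow
    have hconst : (∫ t in c..(c + L), (3 * M / 4) ^ 2) = L * (3 * M / 4) ^ 2 := by
      rw [intervalIntegral.integral_const, smul_eq_mul]; ring_nf
    have hIL : L * (3 * M / 4) ^ 2 ≤ I := by
      rw [← hconst]; exact le_trans hstep2 hstep1
    have : M ^ 3 * (9 / (64 * A)) ≤ I := by
      calc M ^ 3 * (9 / (64 * A)) = L * (3 * M / 4) ^ 2 := by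
            rw [hL]; field_simp; ring
        _ ≤ I := hIL
    have h9 : M ^ 3 * (9 / (64 * A)) * (8 * A) ≤ I * (8 * A) :=
      mul_le_mul_of_nonneg_right this (by positivity)
    have h10 : M ^ 3 * (9 / (64 * A)) * (8 * A) = 9 / 8 * M ^ 3 := by field_simp; ring
    rw [h10] at h9
    nlinarith [pow_nonneg hM0 3, h9]
  -- conclude via cube roots
  have h8 : (8 : ℝ) * A * I = (2 * A ^ ((1:ℝ)/3) * I ^ ((1:ℝ)/3)) ^ 3 := by
    have hA3 : (A ^ ((1:ℝ)/3)) ^ 3 = A := by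
      rw [← Real.rpow_natCast (A ^ ((1:ℝ)/3)) 3, ← Real.rpow_mul hA.le]
      norm_num
    have hI3 : (I ^ ((1:ℝ)/3)) ^ 3 = I := by
      rw [← Real.rpow_natCast (I ^ ((1:ℝ)/3)) 3, ← Real.rpow_mul hI0]
      norm_num
    rw [mul_pow, mul_pow, hA3, hI3]; ring
  rw [h8] at hkey
  have hRHS0 : 0 ≤ 2 * A ^ ((1:ℝ)/3) * I ^ ((1:ℝ)/3) := by positivity
  have hMle : M ≤ 2 * A ^ ((1:ℝ)/3) * I ^ ((1:ℝ)/3) :=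
    le_of_pow_le_pow_left₀ (by norm_num) hRHS0 hkey
  linarith
end
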